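/- Fix b ∈ (0, 1/2), u0 ∈ (0, 1/2), and set a = ((1−2b)/(2(1−b)))^{1/b}, u* = u0·a. Then r0²(u*, u0) = u0^{1−2b}·[1 − a + (1 − a^b)²·a^{1−2b}] ≤ 2·u0^{1−2b}. -/
import Mathlib


open Set

/-- The squared semimetric `r0²(u1,u2) = (u2−u1)/u2^{2b} + (u1^{−b} − u2^{−b})² u1`. -/
noncomputable def r0sq (b u1 u2 : ℝ) : ℝ :=
  (u2 - u1) / u2 ^ (2 * b) + (u1 ^ (-b) - u2 ^ (-b)) ^ 2 * u1

/-- For `b ∈ (0,1/2)`, `u0 ∈ (0,1/2)`, `a = ((1−2b)/(2(1−b)))^{1/b}` and `u* = u0 a`,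
one has `r0²(u*,u0) = u0^{1−2b} [1 − a + (1 − a^b)² a^{1−2b}] ≤ 2 u0^{1−2b}`. -/
theorem r0sq_at_ustar (b u0 : ℝ) (hb0 : 0 < b) (hb : b < 1/2)
    (hu0 : 0 < u0) (hu0' : u0 < 1/2) :
    r0sq b (u0 * ((1 - 2*b) / (2*(1 - b))) ^ (1/b)) u0 =
      u0 ^ (1 - 2*b) * (1 - ((1 - 2*b) / (2*(1 - b))) ^ (1/b)
        + (1 - (((1 - 2*b) / (2*(1 - b))) ^ (1/b)) ^ b) ^ 2
          * (((1 - 2*b) / (2*(1 - b))) ^ (1/b)) ^ (1 - 2*b)) ∧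
    u0 ^ (1 - 2*b) * (1 - ((1 - 2*b) / (2*(1 - b))) ^ (1/b)
        + (1 - (((1 - 2*b) / (2*(1 - b))) ^ (1/b)) ^ b) ^ 2
          * (((1 - 2*b) / (2*(1 - b))) ^ (1/b)) ^ (1 - 2*b)) ≤ 2 * u0 ^ (1 - 2*b) := by
  have hb1 : (0:ℝ) < 1 - b := by linarith
  have hnum : (0:ℝ) < 1 - 2*b := by linarith
  set c : ℝ := (1 - 2*b) / (2*(1 - b)) with hcdef
  have hc0 : 0 < c := by
    apply div_pos hnum; linarith
  have hc1 : c < 1 := by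
    rw [hcdef, div_lt_one (by linarith)]; linarith
  set a : ℝ := c ^ (1/b) with hadef
  have ha0 : 0 < a := Real.rpow_pos_of_pos hc0 _
  have ha1 : a < 1 := Real.rpow_lt_one hc0.le hc1 (by positivity)
  set P : ℝ := u0 ^ (1 - 2*b) with hPdef
  set B : ℝ := a ^ b with hBdef
  set C : ℝ := a ^ (1 - 2*b) with hCdef
  have hP0 : 0 < P := Real.rpow_pos_of_pos hu0 _
  have hB0 : 0 < B := Real.rpow_pos_of_pos ha0 _
  have hB1 : B < 1 := Real.rpow_lt_one ha0.le ha1 hb0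
  have hC0 : 0 < C := Real.rpow_pos_of_pos ha0 _
  have hC1 : C ≤ 1 := Real.rpow_le_one ha0.le ha1.le (by linarith)
  constructor
  · unfold r0sq
    set Q : ℝ := u0 ^ (-b) with hQdef
    set A : ℝ := a ^ (-b) with hAdef
    have hmul : (u0 * a) ^ (-b) = Q * A := Real.mul_rpow hu0.le ha0.le
    have hAB : A * B = 1 := by
      rw [hAdef, hBdef, ← Real.rpow_add ha0]
      norm_num
    have hCC : A * A * a = C := by
      calc A * A * a = a ^ (-b + -b) * a ^ (1:ℝ) := by
            rw [Real.rpow_add ha0, Real.rpow_one]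
        _ = a ^ (-b + -b + 1) := (Real.rpow_add ha0 _ _).symm
        _ = C := by rw [hCdef]; ring_nf
    have hPP : Q * Q * u0 = P := by
      calc Q * Q * u0 = u0 ^ (-b + -b) * u0 ^ (1:ℝ) := by
            rw [Real.rpow_add hu0, Real.rpow_one]
        _ = u0 ^ (-b + -b + 1) := (Real.rpow_add hu0 _ _).symm
        _ = P := by rw [hPdef]; ring_nf
    have hT1 : (u0 - u0 * a) / u0 ^ (2*b) = P * (1 - a) := by
      rw [div_eq_iff (ne_of_gt (Real.rpow_pos_of_pos hu0 _))]
      have h : P * u0 ^ (2*b) = u0 := by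
        rw [hPdef, ← Real.rpow_add hu0, show (1 - 2*b) + 2*b = (1:ℝ) by ring,
          Real.rpow_one]
      linear_combination (a - 1) * h
    have e1 : A - 1 = A * (1 - B) := by linear_combination hAB
    have hT2 : (Q * A - Q) ^ 2 * (u0 * a) = P * ((1 - B) ^ 2 * C) := by
      calc (Q * A - Q) ^ 2 * (u0 * a) = Q ^ 2 * (A - 1) ^ 2 * (u0 * a) := by ring
        _ = Q ^ 2 * (A * (1 - B)) ^ 2 * (u0 * a) := by rw [e1]
        _ = (Q * Q * u0) * (A * A * a) * (1 - B) ^ 2 := by ring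
        _ = P * ((1 - B) ^ 2 * C) := by rw [hPP, hCC]; ring
    rw [hmul, hT1, hT2]
    ring
  · have hkey : 1 - a + (1 - B) ^ 2 * C ≤ 2 := by
      nlinarith [sq_nonneg (1 - B)]
    nlinarith [mul_le_mul_of_nonneg_left hkey hP0.le]
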